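/- Let S be a finite set of cardinality r ≥ 5 and let k = ⌈ log(C(r,4)) / log(32/29) ⌉, where C(r,4) is the binomial coefficient. Then there exist partitions p_1, ..., p_k of S such that every quadruple of distinct elements a, b, c, d of S is separated by at least one of p_1, ..., p_k. -/

import Mathlib

open Finset

/-- The number of functions `S → Fin 4` injective on a finset `T`. -/
lemma card_injOn_aux {S : Type*} [Fintype S] [DecidableEq S] (T : Finset S) :
    Fintype.card {f : S → Fin 4 // Set.InjOn f ↑T}
      = Nat.descFactorial 4 T.card * 4 ^ (Fintype.card S - T.card) := by
  classical
  have e : {f : S → Fin 4 // Set.InjOn f ↑T}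
      ≃ (({x : S // x ∈ T} ↪ Fin 4) × ({x : S // x ∉ T} → Fin 4)) :=
  { toFun := fun f => (⟨fun x => f.1 x.1, fun x y h => Subtype.ext (f.2 x.2 y.2 h)⟩,
      fun x => f.1 x.1)
    invFun := fun fg => ⟨fun x => if h : x ∈ T then fg.1 ⟨x, h⟩ else fg.2 ⟨x, h⟩, by
      intro x hx y hy hxy
      simp only [Finset.mem_coe] at hx hy
      simp only [dif_pos hx, dif_pos hy] at hxy
      exact congrArg Subtype.val (fg.1.injective hxy)⟩
    left_inv := by
      intro f
      ext x
      by_cases h : x ∈ T <;> simp [h] <;> rfl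
    right_inv := by
      intro fg
      ext x
      · simp
      · simp [x.2] }
  rw [Fintype.card_congr e, Fintype.card_prod, Fintype.card_fun,
    Fintype.card_embedding_eq, Fintype.card_coe, Fintype.card_subtype_compl,
    Fintype.card_coe, Fintype.card_fin]


lemma choose_mul_lt (r k : ℕ) (hr : 5 ≤ r)
    (hk : k = ⌈Real.log (r.choose 4) / Real.log (32 / 29)⌉₊) :
    r.choose 4 * 29 ^ k < 32 ^ k := by
  set C := r.choose 4 with hCdef
  have hC5 : 5 ≤ C := by
    calc 5 = Nat.choose 5 4 := by decide
    _ ≤ C := Nat.choose_le_choose 4 hr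
  have hC1 : (1 : ℝ) < (C : ℝ) := by exact_mod_cast by omega
  have hlogC : 0 < Real.log C := Real.log_pos hC1
  have hlogb : 0 < Real.log (32 / 29 : ℝ) := Real.log_pos (by norm_num)
  have hk1 : 1 ≤ k := by
    rw [hk]
    exact Nat.ceil_pos.mpr (div_pos hlogC hlogb)
  -- real inequality : C ≤ (32/29)^k
  have hle : (C : ℝ) ≤ (32 / 29 : ℝ) ^ k := by
    have h1 : Real.log C / Real.log (32 / 29) ≤ (k : ℝ) := by
      rw [hk]; exact Nat.le_ceil _
    have h2 : Real.log C ≤ (k : ℝ) * Real.log (32 / 29) :=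
      (div_le_iff₀ hlogb).mp h1
    have h3 : Real.log C ≤ Real.log ((32 / 29 : ℝ) ^ k) := by
      rw [Real.log_pow]; exact_mod_cast h2
    exact (Real.log_le_log_iff (by positivity) (by positivity)).mp h3
  have hle' : (C : ℕ) * 29 ^ k ≤ 32 ^ k := by
    have : (C : ℝ) * 29 ^ k ≤ 32 ^ k := by
      rw [div_pow] at hle
      calc (C : ℝ) * 29 ^ k ≤ (32 ^ k / 29 ^ k) * 29 ^ k := by
            apply mul_le_mul_of_nonneg_right hle (by positivity)
      _ = 32 ^ k := by field_simp
    exact_mod_cast this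
  refine lt_of_le_of_ne hle' (fun heq => ?_)
  have h29 : (29 : ℕ) ∣ 32 ^ k := by
    rw [← heq]
    exact Dvd.dvd.mul_left (dvd_pow_self 29 (by omega)) C
  have := Nat.Prime.dvd_of_dvd_pow (p := 29) (by norm_num) h29
  omega

lemma pow_ineq (r k : ℕ) (hr : 5 ≤ r) (h : r.choose 4 * 29 ^ k < 32 ^ k) :
    r.choose 4 * (29 * 2 ^ (2 * r - 5)) ^ k < (4 ^ r) ^ k := by
  obtain ⟨m, rfl⟩ : ∃ m, r = m + 5 := ⟨r - 5, by omega⟩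
  have h1 : 2 * (m + 5) - 5 = 2 * m + 5 := by omega
  have h2 : (4 : ℕ) ^ (m + 5) = 32 * (2 ^ (2 * m + 5)) := by
    have : (4 : ℕ) = 2 ^ 2 := rfl
    rw [this, ← pow_mul]
    rw [show 2 * (m + 5) = 5 + (2 * m + 5) by ring, pow_add]
    norm_num
  rw [h1, h2, mul_pow, mul_pow, ← mul_assoc]
  exact Nat.mul_lt_mul_of_lt_of_le h (le_refl _) (by positivity)

/-- A partition of `S` is a map `S → Fin 4`; it separates a quadruple of distinct
elements `a b c d` if the four values are pairwise distinct. -/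
def Separates {S : Type*} (p : S → Fin 4) (a b c d : S) : Prop :=
  p a ≠ p b ∧ p a ≠ p c ∧ p a ≠ p d ∧ p b ≠ p c ∧ p b ≠ p d ∧ p c ≠ p d

/-- If `|S| = r ≥ 5` and `k = ⌈log C(r,4) / log (32/29)⌉`, then there are `k` partitions
of `S` separating every quadruple of distinct elements. -/
theorem exists_separating_partitions {S : Type*} [Fintype S] (r : ℕ) (hr : 5 ≤ r)
    (hcard : Fintype.card S = r)
    (k : ℕ) (hk : k = ⌈Real.log (r.choose 4) / Real.log (32 / 29)⌉₊) :
    ∃ p : Fin k → S → Fin 4,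
      ∀ a b c d : S, a ≠ b → a ≠ c → a ≠ d → b ≠ c → b ≠ d → c ≠ d →
        ∃ i : Fin k, Separates (p i) a b c d := by
  classical
  -- the set of single partitions failing to be injective on T
  set B : Finset S → Finset (S → Fin 4) :=
    fun T => univ.filter (fun f => ¬ Set.InjOn f ↑T) with hB
  have hBcard : ∀ T : Finset S, T.card = 4 → (B T).card = 29 * 2 ^ (2 * r - 5) := by
    intro T hT
    have h1 : (B T).card = Fintype.card {f : S → Fin 4 // ¬ Set.InjOn f ↑T} :=
      (Fintype.card_subtype _).symm
    have h2 : Fintype.card {f : S → Fin 4 // ¬ Set.InjOn f ↑T}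
        = Fintype.card (S → Fin 4) - Fintype.card {f : S → Fin 4 // Set.InjOn f ↑T} :=
      Fintype.card_subtype_compl _
    rw [h1, h2, card_injOn_aux, hT, Fintype.card_fun, Fintype.card_fin, hcard]
    have : Nat.descFactorial 4 4 = 24 := by decide
    rw [this]
    obtain ⟨m, rfl⟩ : ∃ m, r = m + 5 := ⟨r - 5, by omega⟩
    have h32 : (2 : ℕ) ^ (2 * (m + 5) - 5) = 32 * 4 ^ m := by
      rw [show 2 * (m + 5) - 5 = 5 + 2 * m by omega, pow_add, pow_mul]
      norm_num
    have h45 : (4 : ℕ) ^ (m + 5) = 1024 * 4 ^ m := by rw [pow_add]; ring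
    have h41 : (4 : ℕ) ^ (m + 5 - 4) = 4 * 4 ^ m := by
      rw [show m + 5 - 4 = m + 1 by omega, pow_add]; ring
    rw [h45, h41, h32]
    set X := (4 : ℕ) ^ m
    omega
  -- bad tuples of partitions for a given 4-set
  set BadPi : Finset S → Finset (Fin k → S → Fin 4) :=
    fun T => Fintype.piFinset (fun _ => B T) with hBadPi
  set Bad : Finset (Fin k → S → Fin 4) :=
    (powersetCard 4 (univ : Finset S)).biUnion BadPi with hBad
  have hBadcard : Bad.card < Fintype.card (Fin k → S → Fin 4) := by
    have h1 : Bad.card ≤ r.choose 4 * (29 * 2 ^ (2 * r - 5)) ^ k := by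
      calc Bad.card ≤ ∑ T ∈ powersetCard 4 (univ : Finset S), (BadPi T).card :=
            card_biUnion_le
      _ = ∑ T ∈ powersetCard 4 (univ : Finset S), (29 * 2 ^ (2 * r - 5)) ^ k := by
            apply Finset.sum_congr rfl
            intro T hT
            rw [hBadPi]
            rw [Fintype.card_piFinset]
            rw [hBcard T (Finset.mem_powersetCard_univ.mp hT)]
            simp
      _ = r.choose 4 * (29 * 2 ^ (2 * r - 5)) ^ k := by
            rw [Finset.sum_const, Finset.card_powersetCard, Finset.card_univ, hcard,
              smul_eq_mul]
    have h2 : Fintype.card (Fin k → S → Fin 4) = (4 ^ r) ^ k := by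
      rw [Fintype.card_fun, Fintype.card_fun, Fintype.card_fin, Fintype.card_fin, hcard]
    rw [h2]
    exact lt_of_le_of_lt h1 (pow_ineq r k hr (choose_mul_lt r k hr hk))
  have hne : Bad ≠ univ := fun h => by
    rw [h, Finset.card_univ] at hBadcard
    exact lt_irrefl _ hBadcard
  obtain ⟨p, -, hp⟩ :=
    Finset.exists_of_ssubset (Finset.ssubset_iff_subset_ne.mpr ⟨Finset.subset_univ _, hne⟩)
  refine ⟨p, fun a b c d hab hac had hbc hbd hcd => ?_⟩
  set T : Finset S := {a, b, c, d} with hT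
  have hTcard : T.card = 4 := by
    rw [hT, Finset.card_insert_of_notMem (by simp [hab, hac, had]),
      Finset.card_insert_of_notMem (by simp [hbc, hbd]),
      Finset.card_insert_of_notMem (by simp [hcd]), Finset.card_singleton]
  have hTmem : T ∈ powersetCard 4 (univ : Finset S) :=
    Finset.mem_powersetCard_univ.mpr hTcard
  have hnot : ¬ ∀ i, p i ∈ B T := fun hall =>
    hp (Finset.mem_biUnion.mpr ⟨T, hTmem, Fintype.mem_piFinset.mpr hall⟩)
  push_neg at hnot
  obtain ⟨i, hi⟩ := hnot
  have hinj : Set.InjOn (p i) ↑T := by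
    by_contra hcon
    exact hi (Finset.mem_filter.mpr ⟨Finset.mem_univ _, hcon⟩)
  have ma : a ∈ (↑T : Set S) := by simp [hT]
  have mb : b ∈ (↑T : Set S) := by simp [hT]
  have mc : c ∈ (↑T : Set S) := by simp [hT]
  have md : d ∈ (↑T : Set S) := by simp [hT]
  exact ⟨i, fun h => hab (hinj ma mb h), fun h => hac (hinj ma mc h),
    fun h => had (hinj ma md h), fun h => hbc (hinj mb mc h),
    fun h => hbd (hinj mb md h), fun h => hcd (hinj mc md h)⟩
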